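/- If X is a flip cut set of the convex n-gon, then every vertex of the n-gon is an endpoint of some chord of X. -/

import Mathlib

namespace FlipCut

/-- `x` lies strictly inside the open cyclic arc from `a` to `b`
(going forward in the cyclic order on `ZMod n`). -/
def Btw (n : ℕ) (a x b : ZMod n) : Prop :=
  0 < (x - a).val ∧ (x - a).val < (b - a).val

/-- An unordered pair of vertices of the convex `n`-gon is a *chord*:
its two endpoints are distinct and not cyclically adjacent. -/
def IsChord (n : ℕ) (e : Sym2 (ZMod n)) : Prop :=
  ¬ e.IsDiag ∧ ∀ a ∈ e, ∀ b ∈ e, a ≠ b → b ≠ a + 1 ∧ b ≠ a - 1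

/-- Two chords *cross*: they can be written as `{a, b}` and `{c, d}` where `c`
lies strictly inside the open cyclic arc from `a` to `b` and `d` lies strictly
inside the open cyclic arc from `b` to `a` (i.e. the endpoint pairs separate
each other in the cyclic order, equivalently exactly one of `c, d` lies in the
open cyclic arc from `a` to `b`). -/
def Crosses (n : ℕ) (e f : Sym2 (ZMod n)) : Prop :=
  ∃ a b c d : ZMod n, e = s(a, b) ∧ f = s(c, d) ∧ Btw n a c b ∧ Btw n b d a

/-- A *triangulation* of the convex `n`-gon: a set of exactly `n - 3`
pairwise non-crossing chords. -/
def IsTriangulation (n : ℕ) (T : Finset (Sym2 (ZMod n))) : Prop :=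
  T.card = n - 3 ∧ (∀ e ∈ T, IsChord n e) ∧
    ∀ e ∈ T, ∀ f ∈ T, e ≠ f → ¬ Crosses n e f

/-- Triangulations `T` and `T'` differ by a *flip*: their symmetric difference
has exactly two chords. -/
def FlipAdj (n : ℕ) (T T' : Finset (Sym2 (ZMod n))) : Prop :=
  (symmDiff T T').card = 2

/-- `T` *avoids* `X`: `T` contains no chord of `X`. -/
def Avoids (n : ℕ) (T X : Finset (Sym2 (ZMod n))) : Prop :=
  ∀ e ∈ X, e ∉ T

/-- A vertex of the flip graph `F₋ₓ`: a triangulation avoiding `X`. -/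
def AvoidingTri (n : ℕ) (X T : Finset (Sym2 (ZMod n))) : Prop :=
  IsTriangulation n T ∧ Avoids n T X

/-- A single edge of the flip graph `F₋ₓ`: both endpoints are triangulations
avoiding `X` and they differ by a flip. -/
def FlipStep (n : ℕ) (X T T' : Finset (Sym2 (ZMod n))) : Prop :=
  AvoidingTri n X T ∧ AvoidingTri n X T' ∧ FlipAdj n T T'

/-- `S` and `T` are joined by a path in the flip graph `F₋ₓ`: a sequence of
flips in which every intermediate triangulation avoids `X`. -/
def FlipConn (n : ℕ) (X S T : Finset (Sym2 (ZMod n))) : Prop :=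
  Relation.ReflTransGen (FlipStep n X) S T

/-- The flip graph `F₋ₓ` is connected. -/
def FlipGraphConnected (n : ℕ) (X : Finset (Sym2 (ZMod n))) : Prop :=
  ∀ S T, AvoidingTri n X S → AvoidingTri n X T → FlipConn n X S T

/-- `X` is a *flip cut set*: a set of chords such that the flip graph `F₋ₓ`
is disconnected. -/
def IsFlipCutSet (n : ℕ) (X : Finset (Sym2 (ZMod n))) : Prop :=
  (∀ e ∈ X, IsChord n e) ∧ ¬ FlipGraphConnected n X


section Aux

/-- vertex at coordinate `t` (counting from `p`). -/
def P {n : ℕ} (p : ZMod n) (t : ℕ) : ZMod n := p + (t : ZMod n)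

variable {n : ℕ} (p : ZMod n)

lemma P_zero : P p 0 = p := by simp [P]

lemma val_P_sub_P (hn : 0 < n) {i j : ℕ} (hi : i < n) (hj : j < n) :
    (P p i - P p j).val = if j ≤ i then i - j else i + n - j := by
  have h : P p i - P p j = ((i : ZMod n) - (j : ZMod n)) := by unfold P; ring
  rw [h]
  split_ifs with hle
  · have h2 : (i : ZMod n) - (j : ZMod n) = ((i - j : ℕ) : ZMod n) := by
      rw [Nat.cast_sub hle]
    rw [h2, ZMod.val_cast_of_lt (by omega)]
  · have h2 : (i : ZMod n) - (j : ZMod n) = ((i + n - j : ℕ) : ZMod n) := by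
      rw [Nat.cast_sub (by omega), Nat.cast_add, ZMod.natCast_self]
      ring
    rw [h2, ZMod.val_cast_of_lt (by omega)]

lemma P_inj (hn : 0 < n) {i j : ℕ} (hi : i < n) (hj : j < n) (h : P p i = P p j) : i = j := by
  have h0 : P p i - P p j = 0 := by rw [h]; ring
  haveI : NeZero n := ⟨by omega⟩
  have hv := val_P_sub_P p hn hi hj
  rw [h0, ZMod.val_zero] at hv
  split_ifs at hv <;> omega

lemma btw_P (hn : 0 < n) {x y z : ℕ} (hx : x < n) (hy : y < n) (hz : z < n) :
    Btw n (P p x) (P p y) (P p z) ↔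
      (0 < if x ≤ y then y - x else y + n - x) ∧
        ((if x ≤ y then y - x else y + n - x) < if x ≤ z then z - x else z + n - x) := by
  unfold Btw
  rw [val_P_sub_P p hn hy hx, val_P_sub_P p hn hz hx]

lemma btw_P' (hn : 0 < n) {x y z : ℕ} (hx : x < n) (hy : y < n) (hz : z < n)
    (h : Btw n (P p x) (P p y) (P p z)) :
    (0 < if x ≤ y then y - x else y + n - x) ∧
      ((if x ≤ y then y - x else y + n - x) < if x ≤ z then z - x else z + n - x) :=
  (btw_P p hn hx hy hz).mp h

lemma P_succ (t : ℕ) : P p t + 1 = P p (t + 1) := by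
  unfold P; push_cast; ring

lemma P_n : P p n = P p 0 := by
  unfold P; simp [ZMod.natCast_self]

lemma isChord_mk {x y : ZMod n} :
    IsChord n s(x, y) ↔ x ≠ y ∧ y ≠ x + 1 ∧ y ≠ x - 1 ∧ x ≠ y + 1 ∧ x ≠ y - 1 := by
  unfold IsChord
  simp only [Sym2.mk_isDiag_iff, Sym2.mem_iff]
  constructor
  · rintro ⟨h1, h2⟩
    have ha := h2 x (Or.inl rfl) y (Or.inr rfl) h1
    have hb := h2 y (Or.inr rfl) x (Or.inl rfl) (Ne.symm h1)
    exact ⟨h1, ha.1, ha.2, hb.1, hb.2⟩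
  · rintro ⟨h1, h2, h3, h4, h5⟩
    refine ⟨h1, ?_⟩
    rintro a (rfl | rfl) b (rfl | rfl) hab
    · exact absurd rfl hab
    · exact ⟨h2, h3⟩
    · exact ⟨h4, h5⟩
    · exact absurd rfl hab

lemma chord_coord (hn : 3 ≤ n) {i j : ℕ} (hi : 0 < i) (hij : i < j) (hj : j < n) :
    IsChord n (s(P p i, P p j)) ↔ i + 2 ≤ j := by
  rw [isChord_mk]
  have e1 : P p i + 1 = P p (i + 1) := P_succ p i
  have e2 : P p (j - 1) + 1 = P p j := by rw [P_succ]; congr 1; omega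
  have e3 : P p (i - 1) + 1 = P p i := by rw [P_succ]; congr 1; omega
  constructor
  · rintro ⟨h1, h2, -, -, h5⟩
    rcases Nat.lt_or_ge (i + 2) (j + 1) with h | h
    · omega
    · exfalso
      have hji : j = i + 1 := by omega
      exact h2 (by rw [e1, hji])
  · intro h
    have c1 : P p i ≠ P p j := fun hh => by have := P_inj p (by omega) (by omega) hj hh; omega
    have c2 : P p j ≠ P p i + 1 := by
      rw [e1]; intro hh
      have := P_inj p (by omega) hj (by omega) hh; omega
    have c3 : P p j ≠ P p i - 1 := by
      rw [← e3]; intro hh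
      have : P p j = P p (i-1) := by rw [hh]; ring
      have := P_inj p (by omega) hj (by omega) this; omega
    have c4 : P p i ≠ P p j + 1 := by
      rw [P_succ]
      rcases Nat.lt_or_ge (j+1) n with hlt | hge
      · intro hh; have := P_inj p (by omega) (by omega) hlt hh; omega
      · have : j + 1 = n := by omega
        rw [this, P_n]
        intro hh; have := P_inj p (by omega) (by omega) (by omega) hh; omega
    have c5 : P p i ≠ P p j - 1 := by
      rw [← e2]; intro hh
      have : P p i = P p (j-1) := by rw [hh]; ring
      have := P_inj p (by omega) (by omega) (by omega) this; omega
    exact ⟨c1, c2, c3, c4, c5⟩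

lemma P_pred (hn : 0 < n) : P p (n - 1) = p - 1 := by
  unfold P
  rw [Nat.cast_sub (by omega : 1 ≤ n), ZMod.natCast_self]
  ring


lemma chord_p (hn : 3 ≤ n) {w : ℕ} (h2 : 2 ≤ w) (hw : w ≤ n - 2) :
    IsChord n s(p, P p w) := by
  rw [isChord_mk]
  have hinj : ∀ i j : ℕ, i < n → j < n → P p i = P p j → i = j :=
    fun i j hi hj => P_inj p (by omega) hi hj
  have e1 : p + 1 = P p 1 := by unfold P; norm_num
  have e2 : p - 1 = P p (n - 1) := (P_pred p (by omega)).symm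
  have e3 : P p w + 1 = P p (w + 1) := P_succ p w
  have e4 : P p w - 1 = P p (w - 1) := by
    have h := P_succ p (w - 1)
    rw [show w - 1 + 1 = w by omega] at h
    rw [← h]; ring
  refine ⟨?_, ?_, ?_, ?_, ?_⟩
  · intro h
    have h' : P p 0 = P p w := by rw [P_zero]; exact h
    have := hinj 0 w (by omega) (by omega) h'; omega
  · rw [e1]; intro h
    have := hinj w 1 (by omega) (by omega) h; omega
  · rw [e2]; intro h
    have := hinj w (n - 1) (by omega) (by omega) h; omega
  · rw [e3]; intro h
    have h' : P p 0 = P p (w + 1) := by rw [P_zero]; exact h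
    have := hinj 0 (w + 1) (by omega) (by omega) h'; omega
  · rw [e4]; intro h
    have h' : P p 0 = P p (w - 1) := by rw [P_zero]; exact h
    have := hinj 0 (w - 1) (by omega) (by omega) h'; omega

lemma self_P (hn : 0 < n) (x : ZMod n) : x = P p ((x - p).val) := by
  haveI : NeZero n := ⟨by omega⟩
  unfold P
  rw [ZMod.natCast_val, ZMod.cast_id]
  ring

lemma rep (hn : 3 ≤ n) {f : Sym2 (ZMod n)} (hf : IsChord n f) (hpf : p ∉ f) :
    ∃ i j, 0 < i ∧ i < j ∧ j < n ∧ i + 2 ≤ j ∧ f = s(P p i, P p j) := by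
  haveI : NeZero n := ⟨by omega⟩
  induction f using Sym2.ind with
  | _ x y =>
    have hxy : x ≠ y := by
      intro h; exact hf.1 (Sym2.mk_isDiag_iff.mpr h)
    have hpx : x ≠ p := fun h => hpf (Sym2.mem_iff.mpr (Or.inl h.symm))
    have hpy : y ≠ p := fun h => hpf (Sym2.mem_iff.mpr (Or.inr h.symm))
    set i := (x - p).val with hidef
    set j := (y - p).val with hjdef
    have hxP : x = P p i := self_P p (by omega) x
    have hyP : y = P p j := self_P p (by omega) y
    have hi : i < n := ZMod.val_lt _
    have hj : j < n := ZMod.val_lt _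
    have hi0 : i ≠ 0 := by
      intro h; rw [hidef] at h
      rw [ZMod.val_eq_zero, sub_eq_zero] at h; exact hpx h
    have hj0 : j ≠ 0 := by
      intro h; rw [hjdef] at h
      rw [ZMod.val_eq_zero, sub_eq_zero] at h; exact hpy h
    have hij : i ≠ j := by
      intro h
      apply hxy
      rw [hxP, hyP, h]
    rcases Nat.lt_or_ge i j with hlt | hge
    · refine ⟨i, j, by omega, hlt, hj, ?_, by rw [← hxP, ← hyP]⟩
      rw [hxP, hyP] at hf
      exact (chord_coord p hn (by omega) hlt hj).mp hf
    · have hlt : j < i := by omega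
      refine ⟨j, i, by omega, hlt, hi, ?_, by rw [← hxP, ← hyP, Sym2.eq_swap]⟩
      rw [hxP, hyP] at hf
      rw [Sym2.eq_swap] at hf
      exact (chord_coord p hn (by omega) hlt hi).mp hf

lemma rep_p (hn : 3 ≤ n) {f : Sym2 (ZMod n)} (hf : IsChord n f) (hpf : p ∈ f) :
    ∃ w, 2 ≤ w ∧ w ≤ n - 2 ∧ f = s(p, P p w) := by
  haveI : NeZero n := ⟨by omega⟩
  induction f using Sym2.ind with
  | _ x y =>
    rw [Sym2.mem_iff] at hpf
    -- reduce to the case p = x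
    have main : ∀ z : ZMod n, IsChord n s(p, z) → ∃ w, 2 ≤ w ∧ w ≤ n - 2 ∧ s(p, z) = s(p, P p w) := by
      intro z hz
      rw [isChord_mk] at hz
      obtain ⟨h1, h2, h3, -, -⟩ := hz
      set w := (z - p).val with hwdef
      have hzP : z = P p w := self_P p (by omega) z
      have hw : w < n := ZMod.val_lt _
      have hw0 : w ≠ 0 := by
        intro h; rw [hwdef] at h
        rw [ZMod.val_eq_zero, sub_eq_zero] at h; exact h1 h.symm
      have hw1 : w ≠ 1 := by
        intro h
        apply h2
        rw [hzP, h, ← P_succ, P_zero]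
      have hwn : w ≠ n - 1 := by
        intro h
        apply h3
        rw [hzP, h, P_pred p (by omega)]
      exact ⟨w, by omega, by omega, by rw [← hzP]⟩
    rcases hpf with rfl | rfl
    · exact main y hf
    · rw [Sym2.eq_swap] at hf ⊢
      exact main x hf

lemma not_crosses_of_mem {e f : Sym2 (ZMod n)} {v : ZMod n} (hv : v ∈ e) (hv' : v ∈ f) :
    ¬ Crosses n e f := by
  rintro ⟨a, b, c, d, rfl, rfl, ⟨h1, h2⟩, ⟨h3, h4⟩⟩
  rw [Sym2.mem_iff] at hv hv'
  have hca : c ≠ a := by rintro rfl; simp at h1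
  have hcb : c ≠ b := by rintro rfl; exact absurd h2 (lt_irrefl _)
  have hdb : d ≠ b := by rintro rfl; simp at h3
  have hda : d ≠ a := by rintro rfl; exact absurd h4 (lt_irrefl _)
  rcases hv with rfl | rfl <;> rcases hv' with h | h <;> simp_all

lemma cross_construct (hn : 0 < n) {i j k l : ℕ} (hi : 0 < i) (hij : i < j) (hj : j < n)
    (hkl : k < l) (hl : l < n) (h1 : i < k) (h2 : k < j) (h3 : j < l) :
    Crosses n s(P p i, P p j) s(P p k, P p l) := by
  refine ⟨P p i, P p j, P p k, P p l, rfl, rfl, ?_, ?_⟩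
  · rw [btw_P p hn (by omega) (by omega) (by omega)]
    split_ifs <;> omega
  · rw [btw_P p hn (by omega) (by omega) (by omega)]
    split_ifs <;> omega

lemma cross_e_e' (hn : 0 < n) {a b w : ℕ} (ha : 0 < a) (hab : a < b) (hb : b < n)
    (hw1 : a < w) (hw2 : w < b) :
    Crosses n s(P p a, P p b) s(p, P p w) := by
  refine ⟨P p a, P p b, P p w, P p 0, rfl, by rw [P_zero, Sym2.eq_swap], ?_, ?_⟩
  · rw [btw_P p hn (by omega) (by omega) (by omega)]
    split_ifs <;> omega
  · rw [btw_P p hn (by omega) (by omega) (by omega)]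
    split_ifs <;> omega

lemma cross_with_p (hn : 0 < n) {w i j : ℕ} (hw : 0 < w) (hwn : w < n)
    (hi : 0 < i) (hij : i < j) (hj : j < n)
    (h : Crosses n s(P p 0, P p w) s(P p i, P p j) ∨
         Crosses n s(P p i, P p j) s(P p 0, P p w)) :
    i < w ∧ w < j := by
  rcases h with h | h <;>
  · obtain ⟨A, B, C, D, hE, hF, h1, h2⟩ := h
    rcases Sym2.eq_iff.mp hE with ⟨rfl, rfl⟩ | ⟨rfl, rfl⟩ <;>
      rcases Sym2.eq_iff.mp hF with ⟨rfl, rfl⟩ | ⟨rfl, rfl⟩ <;>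
      · have H1 := btw_P' p hn (by omega) (by omega) (by omega) h1
        have H2 := btw_P' p hn (by omega) (by omega) (by omega) h2
        split_ifs at H1 H2 <;> omega


def Fan (n : ℕ) (p : ZMod n) : Finset (Sym2 (ZMod n)) :=
  (Finset.range (n - 3)).image (fun t => s(p, P p (t + 2)))

lemma fan_card (hn : 3 ≤ n) : (Fan n p).card = n - 3 := by
  rw [Fan, Finset.card_image_of_injOn, Finset.card_range]
  intro t1 h1 t2 h2 h
  rw [Finset.mem_coe, Finset.mem_range] at h1 h2
  rcases Sym2.eq_iff.mp h with ⟨-, hh⟩ | ⟨hp1, hp2⟩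
  · have := P_inj p (by omega) (by omega) (by omega) hh; omega
  · exfalso
    have h' : P p 0 = P p (t2 + 2) := by rw [P_zero]; exact hp1
    have := P_inj p (by omega) (by omega) (by omega) h'; omega

lemma fan_tri (hn : 3 ≤ n) : IsTriangulation n (Fan n p) := by
  refine ⟨fan_card p hn, ?_, ?_⟩
  · intro e he
    rw [Fan, Finset.mem_image] at he
    obtain ⟨t, ht, rfl⟩ := he
    rw [Finset.mem_range] at ht
    exact chord_p p hn (by omega) (by omega)
  · intro e he f hf hef
    rw [Fan, Finset.mem_image] at he hf
    obtain ⟨t, -, rfl⟩ := he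
    obtain ⟨t', -, rfl⟩ := hf
    exact not_crosses_of_mem (Sym2.mem_mk_left _ _) (Sym2.mem_mk_left _ _)

lemma eq_fan (hn : 3 ≤ n) {T : Finset (Sym2 (ZMod n))} (hT : IsTriangulation n T)
    (h : ∀ f ∈ T, p ∈ f) : T = Fan n p := by
  refine Finset.eq_of_subset_of_card_le ?_ (by rw [fan_card p hn, hT.1])
  intro f hf
  obtain ⟨w, hw2, hwn, rfl⟩ := rep_p p hn (hT.2.1 f hf) (h f hf)
  rw [Fan, Finset.mem_image]
  have h4 : 4 ≤ n := by omega
  exact ⟨w - 2, Finset.mem_range.mpr (by omega), by rw [show w - 2 + 2 = w by omega]⟩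


lemma step (hn : 3 ≤ n) {X T : Finset (Sym2 (ZMod n))} (hp : ∀ e ∈ X, p ∉ e)
    (hT : AvoidingTri n X T) (hne : ∃ f ∈ T, p ∉ f) :
    ∃ T', FlipStep n X T T' ∧
      (T'.filter (fun f => p ∉ f)).card < (T.filter (fun f => p ∉ f)).card := by
  classical
  obtain ⟨⟨hcard, hchord, hcross⟩, havoid⟩ := hT
  set S : Finset (ℕ × ℕ) := (Finset.range n ×ˢ Finset.range n).filter
    (fun q => 0 < q.1 ∧ q.1 < q.2 ∧ s(P p q.1, P p q.2) ∈ T) with hSdef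
  have hmemS : ∀ q : ℕ × ℕ,
      q ∈ S ↔ (q.2 < n ∧ 0 < q.1 ∧ q.1 < q.2 ∧ s(P p q.1, P p q.2) ∈ T) := by
    intro q
    simp only [hSdef, Finset.mem_filter, Finset.mem_product, Finset.mem_range]
    constructor
    · rintro ⟨⟨-, h2⟩, h3⟩; exact ⟨h2, h3⟩
    · rintro ⟨h2, h3⟩; exact ⟨⟨by omega, h2⟩, h3⟩
  have hSne : S.Nonempty := by
    obtain ⟨f, hfT, hfp⟩ := hne
    obtain ⟨i, j, hi, hij, hj, -, rfl⟩ := rep p hn (hchord f hfT) hfp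
    exact ⟨(i, j), (hmemS (i, j)).mpr ⟨hj, hi, hij, hfT⟩⟩
  obtain ⟨⟨a, b⟩, habS, hmax⟩ := S.exists_max_image (fun q => q.2 - q.1) hSne
  obtain ⟨hbn, ha0, hab, heT⟩ := (hmemS (a, b)).mp habS
  set e := s(P p a, P p b) with hedef
  have hb2 : a + 2 ≤ b := (chord_coord p hn ha0 hab hbn).mp (hchord e heT)
  have hpe : p ∉ e := by
    intro hmem
    rw [hedef, Sym2.mem_iff] at hmem
    rcases hmem with h | h
    · have h' : P p 0 = P p a := by rw [P_zero]; exact h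
      have := P_inj p (by omega) (by omega) (by omega) h'; omega
    · have h' : P p 0 = P p b := by rw [P_zero]; exact h
      have := P_inj p (by omega) (by omega) (by omega) h'; omega
  -- distinctness of P-represented chords
  have hchord_ne : ∀ i j k l : ℕ, i < j → j < n → k < l → l < n → (i, j) ≠ (k, l) →
      s(P p i, P p j) ≠ s(P p k, P p l) := by
    intro i j k l hij hj hkl hl hne h
    rcases Sym2.eq_iff.mp h with ⟨h1, h2⟩ | ⟨h1, h2⟩
    · have e1 := P_inj p (by omega) (by omega) (by omega) h1
      have e2 := P_inj p (by omega) (by omega) (by omega) h2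
      exact hne (by rw [e1, e2])
    · have e1 := P_inj p (by omega) (by omega) (by omega) h1
      have e2 := P_inj p (by omega) (by omega) (by omega) h2
      omega
  -- non-crossing constraints in coordinates
  have hnc : ∀ i j, (i, j) ∈ S → (i, j) ≠ (a, b) →
      ¬(i < a ∧ a < j ∧ j < b) ∧ ¬(a < i ∧ i < b ∧ b < j) ∧ j - i ≤ b - a := by
    intro i j hijS hne2
    obtain ⟨hjn, hi0, hij, hgT⟩ := (hmemS (i, j)).mp hijS
    have hne3 : s(P p i, P p j) ≠ e := hchord_ne i j a b hij hjn hab hbn hne2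
    refine ⟨?_, ?_, by have := hmax (i, j) hijS; simpa using this⟩
    · rintro ⟨h1, h2, h3⟩
      exact hcross _ hgT _ heT hne3
        (cross_construct p (by omega) hi0 hij hjn hab hbn h1 h2 h3)
    · rintro ⟨h1, h2, h3⟩
      exact hcross _ heT _ hgT (Ne.symm hne3)
        (cross_construct p (by omega) ha0 hab hbn hij hjn h1 h2 h3)
  -- choose the new endpoint w
  have hW : ∃ w, a < w ∧ w < b ∧
      ∀ i j, (i, j) ∈ S → (i, j) ≠ (a, b) → ¬(i < w ∧ w < j) := by
    set D : Finset (ℕ × ℕ) := S.filter (fun q => a ≤ q.1 ∧ q.2 ≤ b ∧ q ≠ (a, b)) with hDdef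
    have hclass : ∀ i j w', a < w' → w' < b → (i, j) ∈ S → (i, j) ≠ (a, b) →
        i < w' → w' < j → (i, j) ∈ D := by
      intro i j w' hw1 hw2 hijS hne2 hiw hwj
      obtain ⟨hjn, hi0, hij, -⟩ := (hmemS (i, j)).mp hijS
      obtain ⟨hn1, hn2, hn3⟩ := hnc i j hijS hne2
      rw [hDdef, Finset.mem_filter]
      exact ⟨hijS, by omega, by omega, hne2⟩
    by_cases hD : D.Nonempty
    · obtain ⟨⟨i0, j0⟩, hij0D, hmax0⟩ := D.exists_max_image (fun q => q.2 - q.1) hD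
      rw [hDdef, Finset.mem_filter] at hij0D
      obtain ⟨hij0S, hai0, hj0b, hne0⟩ := hij0D
      obtain ⟨hj0n, hi00, hij0, hg0T⟩ := (hmemS (i0, j0)).mp hij0S
      refine ⟨if i0 = a then j0 else i0, ?_, ?_, ?_⟩
      · split_ifs with h <;> omega
      · split_ifs with h
        · rcases Nat.lt_or_ge j0 b with h' | h'
          · exact h'
          · exfalso; exact hne0 (by simp [h]; omega)
        · omega
      · intro i j hijS hne2 ⟨hiw, hwj⟩
        have hwa : a < (if i0 = a then j0 else i0) := by
          split_ifs with h <;> omega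
        have hwb : (if i0 = a then j0 else i0) < b := by
          split_ifs with h
          · rcases Nat.lt_or_ge j0 b with h' | h'
            · exact h'
            · exfalso; exact hne0 (by simp [h]; omega)
          · omega
        have hijD := hclass i j _ hwa hwb hijS hne2 hiw hwj
        rw [hDdef, Finset.mem_filter] at hijD
        obtain ⟨hijS', hai, hjb, -⟩ := hijD
        obtain ⟨hjn, hi0', hij, hgT⟩ := (hmemS (i, j)).mp hijS'
        have hmaxij : j - i ≤ j0 - i0 := by
          have := hmax0 (i, j) (by rw [hDdef, Finset.mem_filter]; exact ⟨hijS', by omega, by omega, hne2⟩)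
          simpa using this
        have hneij : (i, j) ≠ (i0, j0) := by
          intro h; rw [Prod.mk.injEq] at h
          split_ifs at hiw hwj <;> omega
        have hne4 : s(P p i, P p j) ≠ s(P p i0, P p j0) :=
          hchord_ne i j i0 j0 hij hjn hij0 hj0n hneij
        have hc1 : ¬(i < i0 ∧ i0 < j ∧ j < j0) := by
          rintro ⟨h1, h2, h3⟩
          exact hcross _ hgT _ hg0T hne4
            (cross_construct p (by omega) hi0' hij hjn hij0 hj0n h1 h2 h3)
        have hc2 : ¬(i0 < i ∧ i < j0 ∧ j0 < j) := by
          rintro ⟨h1, h2, h3⟩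
          exact hcross _ hg0T _ hgT (Ne.symm hne4)
            (cross_construct p (by omega) hi00 hij0 hj0n hij hjn h1 h2 h3)
        split_ifs at hiw hwj <;> omega
    · refine ⟨a + 1, by omega, by omega, ?_⟩
      intro i j hijS hne2 ⟨hiw, hwj⟩
      exact hD ⟨(i, j), hclass i j (a + 1) (by omega) (by omega) hijS hne2 hiw hwj⟩
  obtain ⟨w, hwa, hwb, hwprop⟩ := hW
  set e' := s(p, P p w) with he'def
  have he'chord : IsChord n e' := chord_p p hn (by omega) (by omega)
  have hpe' : p ∈ e' := Sym2.mem_mk_left _ _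
  have he'e : e' ≠ e := fun h => hpe (h ▸ hpe')
  have hcee' : Crosses n e e' := cross_e_e' p (by omega) ha0 hab hbn hwa hwb
  have he'T : e' ∉ T := fun hmem => hcross e heT e' hmem (Ne.symm he'e) hcee'
  -- e' crosses nothing remaining
  have hnc' : ∀ g ∈ T, g ≠ e → ¬Crosses n e' g ∧ ¬Crosses n g e' := by
    intro g hgT hge
    by_cases hpg : p ∈ g
    · exact ⟨not_crosses_of_mem hpe' hpg, not_crosses_of_mem hpg hpe'⟩
    · obtain ⟨i, j, hi0, hij, hjn, -, rfl⟩ := rep p hn (hchord g hgT) hpg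
      have hijS : (i, j) ∈ S := (hmemS (i, j)).mpr ⟨hjn, hi0, hij, hgT⟩
      have hne2 : (i, j) ≠ (a, b) := by
        intro h; rw [Prod.mk.injEq] at h
        exact hge (by rw [hedef, h.1, h.2])
      have hw' := hwprop i j hijS hne2
      have hconv : s(P p 0, P p w) = e' := by rw [he'def, P_zero]
      constructor
      · intro hc
        exact hw' (cross_with_p p (by omega) (by omega) (by omega) hi0 hij hjn
          (Or.inl (by rw [hconv]; exact hc)))
      · intro hc
        exact hw' (cross_with_p p (by omega) (by omega) (by omega) hi0 hij hjn
          (Or.inr (by rw [hconv]; exact hc)))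
  have hcard1 : 1 ≤ n - 3 := by
    have : 0 < T.card := Finset.card_pos.mpr ⟨e, heT⟩
    omega
  refine ⟨insert e' (T.erase e), ⟨⟨⟨hcard, hchord, hcross⟩, havoid⟩, ⟨⟨?_, ?_, ?_⟩, ?_⟩, ?_⟩, ?_⟩
  · -- card
    rw [Finset.card_insert_of_notMem (fun h => he'T (Finset.mem_of_mem_erase h)),
      Finset.card_erase_of_mem heT, hcard]
    omega
  · -- chords
    intro f hf
    rcases Finset.mem_insert.mp hf with rfl | hf'
    · exact he'chord
    · exact hchord f (Finset.mem_of_mem_erase hf')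
  · -- noncrossing
    intro f hf g hg hfg
    rcases Finset.mem_insert.mp hf with rfl | hf' <;>
      rcases Finset.mem_insert.mp hg with rfl | hg'
    · exact absurd rfl hfg
    · exact (hnc' g (Finset.mem_of_mem_erase hg') (Finset.ne_of_mem_erase hg')).1
    · exact (hnc' f (Finset.mem_of_mem_erase hf') (Finset.ne_of_mem_erase hf')).2
    · exact hcross f (Finset.mem_of_mem_erase hf') g (Finset.mem_of_mem_erase hg') hfg
  · -- avoids
    intro x hxX
    intro hmem
    rcases Finset.mem_insert.mp hmem with rfl | h'
    · exact hp _ hxX hpe'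
    · exact havoid x hxX (Finset.mem_of_mem_erase h')
  · -- FlipAdj
    have hsd : symmDiff T (insert e' (T.erase e)) = {e, e'} := by
      ext x
      simp only [Finset.mem_symmDiff, Finset.mem_insert, Finset.mem_erase,
        Finset.mem_singleton]
      constructor
      · rintro (⟨hxT, hx⟩ | ⟨hx, hxT⟩)
        · left; by_contra hxe; exact hx (Or.inr ⟨hxe, hxT⟩)
        · rcases hx with h | ⟨-, hxT'⟩
          · right; exact h
          · exact absurd hxT' hxT
      · rintro (rfl | rfl)
        · left
          refine ⟨heT, ?_⟩
          rintro (h | ⟨h1, -⟩)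
          · exact he'e h.symm
          · exact h1 rfl
        · right; exact ⟨Or.inl rfl, he'T⟩
    rw [FlipAdj, hsd]
    exact Finset.card_pair (fun h => he'e (h.symm))
  · -- measure decreases
    have hfilter : (insert e' (T.erase e)).filter (fun f => p ∉ f) =
        (T.filter (fun f => p ∉ f)).erase e := by
      ext x
      simp only [Finset.mem_filter, Finset.mem_insert, Finset.mem_erase]
      constructor
      · rintro ⟨rfl | ⟨hxe, hxT⟩, hpx⟩
        · exact absurd hpe' hpx
        · exact ⟨hxe, hxT, hpx⟩
      · rintro ⟨hxe, hxT, hpx⟩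
        exact ⟨Or.inr ⟨hxe, hxT⟩, hpx⟩
    rw [hfilter]
    exact Finset.card_erase_lt_of_mem (Finset.mem_filter.mpr ⟨heT, hpe⟩)


lemma conn_to_fan (hn : 3 ≤ n) {X : Finset (Sym2 (ZMod n))} (hp : ∀ e ∈ X, p ∉ e) :
    ∀ k T, (T.filter (fun f => p ∉ f)).card ≤ k → AvoidingTri n X T →
      FlipConn n X T (Fan n p) := by
  classical
  intro k
  induction k with
  | zero =>
    intro T hk hT
    have h0 : ∀ f ∈ T, p ∈ f := by
      intro f hf
      by_contra hpf
      have : f ∈ T.filter (fun f => p ∉ f) := Finset.mem_filter.mpr ⟨hf, hpf⟩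
      have := Finset.card_pos.mpr ⟨f, this⟩
      omega
    rw [eq_fan p hn hT.1 h0]; exact Relation.ReflTransGen.refl
  | succ k ih =>
    intro T hk hT
    by_cases h0 : ∀ f ∈ T, p ∈ f
    · rw [eq_fan p hn hT.1 h0]; exact Relation.ReflTransGen.refl
    · push_neg at h0
      obtain ⟨T', hstep, hlt⟩ := step p hn hp hT h0
      exact Relation.ReflTransGen.head hstep (ih T' (by omega) hstep.2.1)

theorem main_aux (n : ℕ) (hn : 3 ≤ n)
    (X : Finset (Sym2 (ZMod n))) (hX : IsFlipCutSet n X) :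
    ∀ p : ZMod n, ∃ e ∈ X, p ∈ e := by
  intro p
  by_contra h
  push_neg at h
  apply hX.2
  intro S T hS hT
  have hsymm : Symmetric (FlipStep n X) := by
    rintro u v ⟨h1, h2, h3⟩
    refine ⟨h2, h1, ?_⟩
    rw [FlipAdj, symmDiff_comm]
    exact h3
  have h1 := conn_to_fan p hn h _ S le_rfl hS
  have h2 := conn_to_fan p hn h _ T le_rfl hT
  exact h1.trans ((@Relation.ReflTransGen.symmetric _ _ ⟨fun _ _ h => hsymm h⟩).symm _ _ h2)


end Aux

/-- If `X` is a flip cut set of the convex `n`-gon, then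
every vertex of the `n`-gon is an endpoint of some chord of `X`. -/
theorem flipCutSet_touches_every_vertex (n : ℕ) (hn : 3 ≤ n)
    (X : Finset (Sym2 (ZMod n))) (hX : IsFlipCutSet n X) :
    ∀ p : ZMod n, ∃ e ∈ X, p ∈ e := by
  exact main_aux n hn X hX

end FlipCut
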